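/- Consider a discrete-time Markov chain (Y_n-chain) on the nonnegative integers that from state n ≥ 1 jumps to n−1 with probability p_n = (1 + c/n)^{−1} and to n+1 with probability 1 − p_n, where c ≥ 0, and where state n has exponential holding time with mean 1/n in continuous time. The expected hitting times e_n of state 0 starting from n satisfy e_n = p_n(e_{n−1} + 1/n) + (1−p_n)(e_{n+1} + 1/n), and the minimal nonnegative solution of this recursion satisfies e_1 = (e^c − 1)/c + ∫_0^c (e^s − 1)/s ds (interpreted as 1 when c = 0), and e_n ≤ n·e_1 for all n ≥ 1. -/

import Mathlib

open scoped Nat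

noncomputable def Tstmt15 (c : ℝ) (m i : ℕ) : ℝ :=
  c ^ i * (m ! : ℝ) / ((m + 1 + i)! : ℝ) * (1 + c / ((m + 1 + i : ℕ) : ℝ))

noncomputable def Astmt15 (c : ℝ) (m : ℕ) : ℝ := ∑' i, Tstmt15 c m i

lemma Tstmt15_nonneg {c : ℝ} (hc : 0 ≤ c) (m i : ℕ) : 0 ≤ Tstmt15 c m i := by
  unfold Tstmt15
  have h1 : (0:ℝ) < ((m + 1 + i : ℕ) : ℝ) := by positivity
  positivity

lemma Tstmt15_le {c : ℝ} (hc : 0 ≤ c) (m i : ℕ) :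
    Tstmt15 c m i ≤ (1 + c) * (c ^ i / i !) := by
  unfold Tstmt15
  have hx : (1:ℝ) ≤ ((m + 1 + i : ℕ) : ℝ) := by exact_mod_cast Nat.one_le_iff_ne_zero.2 (by omega)
  have hfle : (m ! : ℝ) / ((m + 1 + i)! : ℝ) ≤ 1 / (i ! : ℝ) := by
    rw [div_le_div_iff₀ (by positivity) (by positivity), one_mul]
    have h2 : m ! * i ! ≤ (m + 1 + i)! := by
      calc m ! * i ! ≤ (m + i)! :=
            Nat.le_of_dvd (Nat.factorial_pos _) (Nat.factorial_mul_factorial_dvd_factorial_add m i)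
        _ ≤ (m + 1 + i)! := Nat.factorial_le (by omega)
    exact_mod_cast h2
  have hc2 : 1 + c / ((m + 1 + i : ℕ) : ℝ) ≤ 1 + c := by
    have := div_le_self hc hx
    linarith
  calc c ^ i * (m ! : ℝ) / ((m + 1 + i)! : ℝ) * (1 + c / ((m + 1 + i : ℕ) : ℝ))
      ≤ c ^ i * (m ! : ℝ) / ((m + 1 + i)! : ℝ) * (1 + c) := by
        apply mul_le_mul_of_nonneg_left hc2
        positivity
    _ ≤ c ^ i * (1 / (i ! : ℝ)) * (1 + c) := by
        apply mul_le_mul_of_nonneg_right _ (by linarith)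
        rw [mul_div_assoc]
        exact mul_le_mul_of_nonneg_left hfle (by positivity)
    _ = (1 + c) * (c ^ i / i !) := by ring

lemma Tstmt15_summable {c : ℝ} (hc : 0 ≤ c) (m : ℕ) : Summable (Tstmt15 c m) :=
  Summable.of_nonneg_of_le (Tstmt15_nonneg hc m) (Tstmt15_le hc m)
    ((Real.summable_pow_div_factorial c).mul_left (1 + c))

lemma Astmt15_nonneg {c : ℝ} (hc : 0 ≤ c) (m : ℕ) : 0 ≤ Astmt15 c m :=
  tsum_nonneg (Tstmt15_nonneg hc m)

lemma Astmt15_rec {c : ℝ} (hc : 0 < c) (m : ℕ) :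
    Astmt15 c (m + 1) = ((m:ℝ) + 1) / c * Astmt15 c m - 1 / c - 1 / ((m:ℝ) + 1) := by
  have hs := Tstmt15_summable hc.le m
  have key : ((m:ℝ) + 1) / c * Astmt15 c m
      = (1 / c + 1 / ((m:ℝ) + 1)) + Astmt15 c (m + 1) := by
    have h1 : ((m:ℝ) + 1) / c * Astmt15 c m = ∑' i, ((m:ℝ) + 1) / c * Tstmt15 c m i := by
      rw [Astmt15, tsum_mul_left]
    rw [h1, Summable.tsum_eq_zero_add (hs.mul_left _)]
    congr 1
    · -- head term
      unfold Tstmt15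
      have hm1 : ((m + 1 + 0 : ℕ) : ℝ) = (m:ℝ) + 1 := by push_cast; ring
      have hfac : ((m + 1 + 0)! : ℝ) = ((m:ℝ) + 1) * (m ! : ℝ) := by
        norm_num [Nat.factorial_succ]
      rw [hm1, hfac]
      have hm0 : ((m:ℝ) + 1) ≠ 0 := by positivity
      have hf0 : (m ! : ℝ) ≠ 0 := by exact_mod_cast (Nat.factorial_pos m).ne'
      field_simp
    · -- tail
      rw [Astmt15]
      apply tsum_congr
      intro i
      unfold Tstmt15
      have hidx : m + 1 + (i + 1) = m + 1 + 1 + i := by omega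
      rw [hidx]
      have hfac : ((m + 1)! : ℝ) = ((m:ℝ) + 1) * (m ! : ℝ) := by
        norm_num [Nat.factorial_succ]
      rw [hfac]
      have hf0 : ((m + 1 + 1 + i)! : ℝ) ≠ 0 := by exact_mod_cast (Nat.factorial_pos _).ne'
      field_simp
      ring
  linarith [key]

lemma Astmt15_mono {c : ℝ} (hc : 0 ≤ c) (m : ℕ) : Astmt15 c (m + 1) ≤ Astmt15 c m := by
  apply Summable.tsum_le_tsum _ (Tstmt15_summable hc (m + 1)) (Tstmt15_summable hc m)
  intro i
  unfold Tstmt15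
  have hx1 : (1:ℝ) ≤ ((m + 1 + i : ℕ) : ℝ) := by exact_mod_cast Nat.one_le_iff_ne_zero.2 (by omega)
  have hx2 : ((m + 1 + i : ℕ) : ℝ) ≤ ((m + 1 + 1 + i : ℕ) : ℝ) := by
    exact_mod_cast Nat.le_of_lt_succ (by omega)
  have h1 : c ^ i * ((m + 1)! : ℝ) / ((m + 1 + 1 + i)! : ℝ)
      ≤ c ^ i * (m ! : ℝ) / ((m + 1 + i)! : ℝ) := by
    rw [div_le_div_iff₀ (by positivity) (by positivity)]
    have h2 : (m + 1)! * (m + 1 + i)! ≤ m ! * (m + 1 + 1 + i)! := by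
      have e1 : (m + 1)! = (m + 1) * m ! := Nat.factorial_succ m
      have e2 : (m + 1 + 1 + i)! = (m + 1 + 1 + i) * (m + 1 + i)! := by
        have : m + 1 + 1 + i = (m + 1 + i) + 1 := by omega
        rw [this, Nat.factorial_succ]
      rw [e1, e2]
      calc (m + 1) * m ! * (m + 1 + i)! ≤ (m + 1 + 1 + i) * (m ! * (m + 1 + i)!) := by
            rw [Nat.mul_assoc]
            exact Nat.mul_le_mul_right _ (by omega)
        _ = m ! * ((m + 1 + 1 + i) * (m + 1 + i)!) := by ring
    calc c ^ i * ((m + 1)! : ℝ) * ((m + 1 + i)! : ℝ)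
        = c ^ i * (((m + 1)! * (m + 1 + i)! : ℕ) : ℝ) := by push_cast; ring
      _ ≤ c ^ i * ((m ! * (m + 1 + 1 + i)! : ℕ) : ℝ) := by
          apply mul_le_mul_of_nonneg_left _ (by positivity)
          exact_mod_cast h2
      _ = c ^ i * (m ! : ℝ) * ((m + 1 + 1 + i)! : ℝ) := by push_cast; ring
  have h3 : 1 + c / ((m + 1 + 1 + i : ℕ) : ℝ) ≤ 1 + c / ((m + 1 + i : ℕ) : ℝ) := by
    have hx0 : (0:ℝ) < ((m + 1 + i : ℕ) : ℝ) := by linarith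
    gcongr
  have hnn : (0:ℝ) ≤ c ^ i * ((m + 1)! : ℝ) / ((m + 1 + 1 + i)! : ℝ) := by positivity
  have hnn2 : (0:ℝ) ≤ 1 + c / ((m + 1 + 1 + i : ℕ) : ℝ) := by
    have : (0:ℝ) < ((m + 1 + 1 + i : ℕ) : ℝ) := by positivity
    positivity
  calc c ^ i * ((m + 1)! : ℝ) / ((m + 1 + 1 + i)! : ℝ) * (1 + c / ((m + 1 + 1 + i : ℕ) : ℝ))
      ≤ c ^ i * (m ! : ℝ) / ((m + 1 + i)! : ℝ) * (1 + c / ((m + 1 + 1 + i : ℕ) : ℝ)) :=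
        mul_le_mul_of_nonneg_right h1 hnn2
    _ ≤ c ^ i * (m ! : ℝ) / ((m + 1 + i)! : ℝ) * (1 + c / ((m + 1 + i : ℕ) : ℝ)) :=
        mul_le_mul_of_nonneg_left h3 (by positivity)

lemma Astmt15_le_zero {c : ℝ} (hc : 0 ≤ c) (m : ℕ) : Astmt15 c m ≤ Astmt15 c 0 := by
  induction m with
  | zero => exact le_rfl
  | succ k ih => exact (Astmt15_mono hc k).trans ih


lemma exp_tsum15 (x : ℝ) : Real.exp x = ∑' n : ℕ, x ^ n / n ! := by
  rw [Real.exp_eq_exp_ℝ, NormedSpace.exp_eq_tsum_div]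

lemma sum1_summable15 {x : ℝ} (hx : 0 ≤ x) :
    Summable (fun i : ℕ => x ^ i / ((i + 1)! : ℝ)) := by
  apply Summable.of_nonneg_of_le (fun i => by positivity) _ (Real.summable_pow_div_factorial x)
  intro i
  exact div_le_div_of_nonneg_left (by positivity)
    (by exact_mod_cast Nat.factorial_pos i)
    (by exact_mod_cast Nat.factorial_le (Nat.le_succ i))

lemma sum2_summable15 {x : ℝ} (hx : 0 ≤ x) :
    Summable (fun i : ℕ => x ^ (i + 1) / (((i : ℝ) + 1) * ((i + 1)! : ℝ))) := by
  apply Summable.of_nonneg_of_le (fun i => by positivity) _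
    ((Real.summable_pow_div_factorial x).mul_left x)
  intro i
  have h1 : (i ! : ℝ) ≤ ((i : ℝ) + 1) * ((i + 1)! : ℝ) := by
    have : (i ! : ℝ) ≤ ((i + 1)! : ℝ) := by exact_mod_cast Nat.factorial_le (Nat.le_succ i)
    nlinarith [show (0:ℝ) < ((i + 1)! : ℝ) by exact_mod_cast Nat.factorial_pos (i+1)]
  calc x ^ (i + 1) / (((i : ℝ) + 1) * ((i + 1)! : ℝ)) ≤ x ^ (i + 1) / (i ! : ℝ) :=
        div_le_div_of_nonneg_left (by positivity)
          (by exact_mod_cast Nat.factorial_pos i) h1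
    _ = x * (x ^ i / i !) := by ring

lemma sum1_eq15 {x : ℝ} (hx : 0 < x) :
    ∑' i : ℕ, x ^ i / ((i + 1)! : ℝ) = (Real.exp x - 1) / x := by
  rw [eq_div_iff hx.ne']
  have h0 : (∑' i : ℕ, x ^ i / ((i + 1)! : ℝ)) * x = ∑' i : ℕ, x ^ (i + 1) / ((i + 1)! : ℝ) := by
    rw [← tsum_mul_right]
    exact tsum_congr fun i => by ring
  have h1 : Real.exp x = 1 + ∑' i : ℕ, x ^ (i + 1) / ((i + 1)! : ℝ) := by
    rw [exp_tsum15 x, Summable.tsum_eq_zero_add (Real.summable_pow_div_factorial x)]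
    norm_num
  rw [h0]
  linarith

lemma G_hasDerivAt15 {c : ℝ} (hc : 0 < c) {x : ℝ} (hx : x ∈ Set.Ioo (-1 : ℝ) (c + 1)) :
    HasDerivAt (fun z : ℝ => ∑' i : ℕ, z ^ (i + 1) / (((i : ℝ) + 1) * ((i + 1)! : ℝ)))
      (∑' i : ℕ, x ^ i / ((i + 1)! : ℝ)) x := by
  refine hasDerivAt_tsum_of_isPreconnected
    (u := fun i : ℕ => (c + 1) ^ i / (i ! : ℝ)) (Real.summable_pow_div_factorial (c + 1))
    isOpen_Ioo (convex_Ioo _ _).isPreconnected (y₀ := (0:ℝ))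
    (g' := fun i y => y ^ i / ((i + 1)! : ℝ)) ?_ ?_ ?_ ?_ hx
  · intro i y hy
    have h := (hasDerivAt_pow (i + 1) y).div_const (((i : ℝ) + 1) * ((i + 1)! : ℝ))
    convert h using 1
    · rfl
    have hne : ((i : ℝ) + 1) ≠ 0 := by positivity
    have hfne : ((i + 1)! : ℝ) ≠ 0 := by exact_mod_cast (Nat.factorial_pos (i + 1)).ne'
    push_cast
    field_simp
  · intro i y hy
    have hy1 : |y| ≤ c + 1 := by
      rw [abs_le]
      constructor <;> [linarith [hy.1]; linarith [hy.2]]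
    rw [Real.norm_eq_abs, abs_div]
    have h2 : |y ^ i| ≤ (c + 1) ^ i := by
      rw [abs_pow]
      exact pow_le_pow_left₀ (abs_nonneg y) hy1 i
    have h3 : (i ! : ℝ) ≤ |((i + 1)! : ℝ)| := by
      rw [abs_of_pos (by exact_mod_cast Nat.factorial_pos (i + 1))]
      exact_mod_cast Nat.factorial_le (Nat.le_succ i)
    apply div_le_div₀ (by positivity) h2 (by exact_mod_cast Nat.factorial_pos i) h3
  · exact ⟨by norm_num, by linarith⟩
  · apply Summable.congr summable_zero
    intro i
    simp [zero_pow (Nat.succ_ne_zero i)]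

lemma integrand_integrable15 {c : ℝ} (hc : 0 < c) :
    IntervalIntegrable (fun s => (Real.exp s - 1) / s) MeasureTheory.volume 0 c := by
  rw [intervalIntegrable_iff_integrableOn_Ioc_of_le hc.le]
  apply MeasureTheory.Measure.integrableOn_of_bounded (M := Real.exp c)
  · exact (measure_Ioc_lt_top).ne
  · exact ((Real.measurable_exp.sub measurable_const).div measurable_id).aestronglyMeasurable
  · filter_upwards [MeasureTheory.ae_restrict_mem measurableSet_Ioc] with s hs
    have hs0 : 0 < s := hs.1
    have h1 : 1 ≤ Real.exp s := by
      rw [← Real.exp_zero]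
      exact Real.exp_le_exp.2 hs0.le
    have key : Real.exp s - 1 ≤ s * Real.exp s := by
      have := Real.add_one_le_exp (-s)
      have hpos := Real.exp_pos s
      have : (-s + 1) * Real.exp s ≤ Real.exp (-s) * Real.exp s :=
        mul_le_mul_of_nonneg_right this hpos.le
      rw [← Real.exp_add, neg_add_cancel, Real.exp_zero] at this
      nlinarith
    rw [Real.norm_eq_abs, abs_of_nonneg (div_nonneg (by linarith) hs0.le)]
    rw [div_le_iff₀ hs0]
    calc Real.exp s - 1 ≤ s * Real.exp s := key
      _ ≤ Real.exp c * s := by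
          have := mul_le_mul_of_nonneg_left (Real.exp_le_exp.2 hs.2) hs0.le
          linarith
    
lemma integral_eq15 {c : ℝ} (hc : 0 < c) :
    ∫ s in (0:ℝ)..c, (Real.exp s - 1) / s
      = ∑' i : ℕ, c ^ (i + 1) / (((i : ℝ) + 1) * ((i + 1)! : ℝ)) := by
  have hG0 : (∑' i : ℕ, (0:ℝ) ^ (i + 1) / (((i : ℝ) + 1) * ((i + 1)! : ℝ))) = 0 := by
    have hz : (fun i : ℕ => (0:ℝ) ^ (i + 1) / (((i : ℝ) + 1) * ((i + 1)! : ℝ)))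
        = fun _ => (0:ℝ) := by
      funext i
      simp [zero_pow (Nat.succ_ne_zero i)]
    rw [hz, tsum_zero]
  have hcont : ContinuousOn (fun z : ℝ => ∑' i : ℕ, z ^ (i + 1) / (((i : ℝ) + 1) * ((i + 1)! : ℝ)))
      (Set.Icc 0 c) := by
    intro x hx
    have hmem : x ∈ Set.Ioo (-1 : ℝ) (c + 1) := ⟨by linarith [hx.1], by linarith [hx.2]⟩
    exact (G_hasDerivAt15 hc hmem).continuousAt.continuousWithinAt
  have hderiv : ∀ x ∈ Set.Ioo 0 c,
      HasDerivWithinAt (fun z : ℝ => ∑' i : ℕ, z ^ (i + 1) / (((i : ℝ) + 1) * ((i + 1)! : ℝ)))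
        ((Real.exp x - 1) / x) (Set.Ioi x) x := by
    intro x hx
    have h := G_hasDerivAt15 hc (x := x) ⟨by linarith [hx.1], by linarith [hx.2]⟩
    rw [sum1_eq15 hx.1] at h
    exact h.hasDerivWithinAt
  have := intervalIntegral.integral_eq_sub_of_hasDeriv_right_of_le hc.le hcont hderiv
    (integrand_integrable15 hc)
  rw [this, hG0, sub_zero]

lemma Astmt15_zero_eq {c : ℝ} (hc : 0 < c) :
    Astmt15 c 0 = (Real.exp c - 1) / c + ∫ s in (0:ℝ)..c, (Real.exp s - 1) / s := by
  rw [integral_eq15 hc, ← sum1_eq15 hc, Astmt15,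
    ← Summable.tsum_add (sum1_summable15 hc.le) (sum2_summable15 hc.le)]
  apply tsum_congr
  intro i
  unfold Tstmt15
  have hidx : 0 + 1 + i = i + 1 := by omega
  rw [hidx]
  have h0 : ((i + 1 : ℕ) : ℝ) = (i : ℝ) + 1 := by push_cast; ring
  rw [h0]
  have hne : ((i : ℝ) + 1) ≠ 0 := by positivity
  have hfne : ((i + 1)! : ℝ) ≠ 0 := by exact_mod_cast (Nat.factorial_pos (i + 1)).ne'
  rw [Nat.factorial_zero]
  push_cast
  field_simp
  ring

lemma solve15' {c N x y z : ℝ} (hc : 0 < c) (hN : 0 < N)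
    (h : z = y + N / c * (y - x) - 1 / c - 1 / N) :
    y = (1 + c / N)⁻¹ * (x + 1 / N) + (1 - (1 + c / N)⁻¹) * (z + 1 / N) := by
  have h1 : (1:ℝ) + c / N ≠ 0 := by positivity
  rw [h]
  field_simp
  ring

lemma solve15 {c N x y z : ℝ} (hc : 0 < c) (hN : 0 < N)
    (h : y = (1 + c / N)⁻¹ * (x + 1 / N) + (1 - (1 + c / N)⁻¹) * (z + 1 / N)) :
    z = y + N / c * (y - x) - 1 / c - 1 / N := by
  have h1 : (1:ℝ) + c / N ≠ 0 := by positivity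
  have h2 : (1 + c / N)⁻¹ = N / (N + c) := by
    rw [inv_eq_one_div]
    rw [div_eq_div_iff h1 (by positivity)]
    field_simp
  rw [h2] at h
  have h3 : N + c ≠ 0 := by positivity
  field_simp at h ⊢
  linear_combination -h

/-- Consider the jump chain on `ℤ_+` which from state `n ≥ 1` jumps down with probability
`p_n = (1+c/n)^{−1}` and up with probability `1 − p_n` (`c ≥ 0`), the holding time at `n`
being exponential with mean `1/n`. The expected hitting times `e_n` of state `0` satisfy
`e_n = p_n(e_{n−1} + 1/n) + (1−p_n)(e_{n+1} + 1/n)`, and the minimal nonnegative solution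
of this recursion satisfies `e_1 = (e^c − 1)/c + ∫_0^c (e^s − 1)/s ds` (interpreted as `1`
when `c = 0`) and `e_n ≤ n·e_1` for all `n ≥ 1`. -/
theorem stmt15 (c : ℝ) (hc : 0 ≤ c) (e : ℕ → ℝ)
    (he0 : e 0 = 0) (henn : ∀ n, 0 ≤ e n)
    (hrec : ∀ n : ℕ, 1 ≤ n →
      e n = (1 + c / n)⁻¹ * (e (n - 1) + 1 / n) + (1 - (1 + c / n)⁻¹) * (e (n + 1) + 1 / n))
    (hmin : ∀ e' : ℕ → ℝ, e' 0 = 0 → (∀ n, 0 ≤ e' n) →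
      (∀ n : ℕ, 1 ≤ n →
        e' n = (1 + c / n)⁻¹ * (e' (n - 1) + 1 / n) +
          (1 - (1 + c / n)⁻¹) * (e' (n + 1) + 1 / n)) →
      ∀ n, e n ≤ e' n) :
    e 1 = (if c = 0 then 1 else
        (Real.exp c - 1) / c + ∫ s in (0:ℝ)..c, (Real.exp s - 1) / s) ∧
    ∀ n : ℕ, 1 ≤ n → e n ≤ n * e 1 := by
  rcases eq_or_lt_of_le hc with hc0 | hcpos
  · -- c = 0
    subst hc0
    have hstep : ∀ n : ℕ, 1 ≤ n → e n = e (n - 1) + 1 / n := by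
      intro n hn
      have h := hrec n hn
      simpa using h
    have he1 : e 1 = 1 := by
      have := hstep 1 le_rfl
      simp [he0] at this
      simpa using this
    have hbd : ∀ n : ℕ, e n ≤ n := by
      intro n
      induction n with
      | zero => simp [he0]
      | succ k ih =>
        have h := hstep (k + 1) (by omega)
        simp only [Nat.add_sub_cancel] at h
        have h2 : (1:ℝ) / ((k:ℝ) + 1) ≤ 1 := by
          rw [div_le_one (by positivity)]
          linarith
        push_cast at h ⊢
        linarith
    refine ⟨by rw [if_pos rfl]; exact he1, fun n hn => ?_⟩
    rw [he1, mul_one]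
    exact hbd n
  · -- c > 0
    set A : ℕ → ℝ := Astmt15 c with hA
    set E' : ℕ → ℝ := fun n => ∑ k ∈ Finset.range n, A k with hE'
    have he'0 : E' 0 = 0 := by simp [hE']
    have he'nn : ∀ n, 0 ≤ E' n := fun n =>
      Finset.sum_nonneg fun k _ => Astmt15_nonneg hc k
    have hE'succ : ∀ m : ℕ, E' (m + 1) = E' m + A m := by
      intro m
      simp [hE', Finset.sum_range_succ]
    have hE'1 : E' 1 = A 0 := by rw [hE'succ 0, he'0, zero_add]
    have hNpos : ∀ m : ℕ, (0:ℝ) < (m:ℝ) + 1 := fun m => by positivity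
    have he'rec : ∀ n : ℕ, 1 ≤ n →
        E' n = (1 + c / n)⁻¹ * (E' (n - 1) + 1 / n) +
          (1 - (1 + c / n)⁻¹) * (E' (n + 1) + 1 / n) := by
      intro n hn
      obtain ⟨m, rfl⟩ : ∃ m, n = m + 1 := ⟨n - 1, by omega⟩
      simp only [Nat.add_sub_cancel]
      have hcast : ((m + 1 : ℕ) : ℝ) = (m:ℝ) + 1 := by push_cast; ring
      rw [hcast]
      apply solve15' hcpos (hNpos m)
      have hArec : A (m + 1) = ((m:ℝ) + 1) / c * A m - 1 / c - 1 / ((m:ℝ) + 1) :=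
        Astmt15_rec hcpos m
      rw [hE'succ (m + 1), hE'succ m, hArec]
      ring
    have hle := hmin E' he'0 he'nn he'rec
    -- forward recursion for e
    have hfwd : ∀ m : ℕ, e (m + 2) = e (m + 1) + (((m:ℝ) + 1) / c) * (e (m + 1) - e m)
        - 1 / c - 1 / ((m:ℝ) + 1) := by
      intro m
      have h := hrec (m + 1) (by omega)
      simp only [Nat.add_sub_cancel] at h
      have hcast : ((m + 1 : ℕ) : ℝ) = (m:ℝ) + 1 := by push_cast; ring
      rw [hcast] at h
      exact solve15 hcpos (hNpos m) h
    -- the difference lemma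
    have hD : ∀ m : ℕ, A m - (e (m + 1) - e m) = (A 0 - e 1) * (m ! : ℝ) / c ^ m := by
      intro m
      induction m with
      | zero => simp [he0]
      | succ k ih =>
        have h1 : A (k + 1) = ((k:ℝ) + 1) / c * A k - 1 / c - 1 / ((k:ℝ) + 1) :=
          Astmt15_rec hcpos k
        have h2 := hfwd k
        have hfac : (((k + 1)! : ℕ) : ℝ) = ((k:ℝ) + 1) * (k ! : ℝ) := by
          rw [Nat.factorial_succ]; push_cast; ring
        have : A (k + 1) - (e (k + 2) - e (k + 1))
            = (((k:ℝ) + 1) / c) * (A k - (e (k + 1) - e k)) := by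
          rw [h1, h2]; ring
        rw [this, ih, hfac]
        have hc' : c ≠ 0 := hcpos.ne'
        field_simp
        ring
    -- e 1 = A 0
    have he1A : e 1 = A 0 := by
      refine le_antisymm (by simpa [hE'1] using hle 1) ?_
      by_contra hlt
      push_neg at hlt
      set d0 : ℝ := A 0 - e 1 with hd0
      have hd0pos : 0 < d0 := by simp [hd0]; linarith
      have hA0nn : 0 ≤ A 0 := Astmt15_nonneg hc 0
      have htend := (Real.summable_pow_div_factorial c).tendsto_atTop_zero
      have hev : ∀ᶠ m in Filter.atTop, c ^ m / (m ! : ℝ) < d0 / (A 0 + 1) :=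
        htend.eventually (gt_mem_nhds (by positivity))
      obtain ⟨N, hN⟩ := hev.exists_forall_of_atTop
      have hstep : ∀ m : ℕ, N ≤ m → e (m + 1) ≤ e m - 1 := by
        intro m hm
        have h1 := hD m
        have h2 := hN m hm
        have hpos : (0:ℝ) < c ^ m / (m ! : ℝ) := by
          have : (0:ℝ) < (m ! : ℝ) := by exact_mod_cast Nat.factorial_pos m
          positivity
        have h3 : A 0 + 1 < d0 * ((m ! : ℝ) / c ^ m) := by
          have hinv : (m ! : ℝ) / c ^ m = (c ^ m / (m ! : ℝ))⁻¹ := by rw [inv_div]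
          rw [hinv, ← div_eq_mul_inv, lt_div_iff₀ hpos]
          have h2' : c ^ m / (m ! : ℝ) * (A 0 + 1) < d0 :=
            (lt_div_iff₀ (by positivity : (0:ℝ) < A 0 + 1)).1 h2
          nlinarith
        have h4 : A m ≤ A 0 := Astmt15_le_zero hc m
        have h5 : e (m + 1) - e m = A m - d0 * (m ! : ℝ) / c ^ m := by linarith [h1]
        have : d0 * (m ! : ℝ) / c ^ m = d0 * ((m ! : ℝ) / c ^ m) := by ring
        rw [this] at h5
        linarith
      have hdesc : ∀ k : ℕ, e (N + k) ≤ e N - k := by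
        intro k
        induction k with
        | zero => simp
        | succ j ih =>
          have := hstep (N + j) (by omega)
          push_cast
          have harr : N + (j + 1) = (N + j) + 1 := by omega
          rw [harr]
          push_cast at ih
          linarith
      set K : ℕ := Nat.ceil (e N) + 1 with hK
      have h6 := hdesc K
      have h7 : (e N : ℝ) ≤ (Nat.ceil (e N) : ℝ) := Nat.le_ceil _
      have h8 : ((K:ℕ) : ℝ) = (Nat.ceil (e N) : ℝ) + 1 := by rw [hK]; push_cast; ring
      have := henn (N + K)
      rw [h8] at h6
      linarith
    -- e = E'
    have heq : ∀ m : ℕ, e m = E' m ∧ e (m + 1) = E' (m + 1) := by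
      intro m
      induction m with
      | zero => exact ⟨by rw [he0, he'0], by rw [he1A, hE'1]⟩
      | succ k ih =>
        refine ⟨ih.2, ?_⟩
        have hE'fwd : E' (k + 2) = E' (k + 1) + (((k:ℝ) + 1) / c) * (E' (k + 1) - E' k)
            - 1 / c - 1 / ((k:ℝ) + 1) := by
          have hArec : A (k + 1) = ((k:ℝ) + 1) / c * A k - 1 / c - 1 / ((k:ℝ) + 1) :=
            Astmt15_rec hcpos k
          rw [hE'succ (k + 1), hE'succ k, hArec]
          ring
        rw [hfwd k, hE'fwd, ih.1, ih.2]
    constructor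
    · rw [if_neg hcpos.ne', he1A]
      exact Astmt15_zero_eq hcpos
    · intro n hn
      have h1 : e n = E' n := (heq n).1
      have h2 : E' n ≤ n * A 0 := by
        rw [hE']
        calc ∑ k ∈ Finset.range n, A k ≤ ∑ k ∈ Finset.range n, A 0 :=
              Finset.sum_le_sum fun k _ => Astmt15_le_zero hc k
          _ = n * A 0 := by rw [Finset.sum_const, Finset.card_range, nsmul_eq_mul]
      rw [h1, he1A]
      exact h2
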